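/- Let (X_{N,k})_{1 ≤ k ≤ N} be real random variables adapted to a filtration (G_k^N), and define Y_{N,k} = X_{N,k} − E[X_{N,k} | G_{k−1}^N]. Then E[ sup_{1 ≤ k ≤ N} |Y_{N,k}| ] ≤ 3 · E[ sup_{1 ≤ k ≤ N} |X_{N,k}| ]. -/

import Mathlib

open MeasureTheory

/-- Running maximum of absolute values: `runMax X k ω = max_{1 ≤ j ≤ k} |X j ω|` (and `0` for
`k = 0`). -/
noncomputable def runMax {Ω : Type*} (X : ℕ → Ω → ℝ) : ℕ → Ω → ℝ
  | 0 => fun _ => 0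
  | (k + 1) => fun ω => max (runMax X k ω) |X (k + 1) ω|

/-- For a nonempty finset and a function nonnegative on it, the (conditionally complete) indexed
supremum over the finset equals `Finset.sup'`. -/
lemma real_biSup_finset_eq_sup' {ι : Type*} {s : Finset ι} (hs : s.Nonempty) (f : ι → ℝ)
    (hf : ∀ i ∈ s, 0 ≤ f i) : (⨆ i ∈ s, f i) = s.sup' hs f := by
  obtain ⟨i₀, hi₀⟩ := hs
  have h0 : 0 ≤ s.sup' ⟨i₀, hi₀⟩ f := le_trans (hf i₀ hi₀) (Finset.le_sup' f hi₀)
  apply le_antisymm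
  · apply Real.iSup_le _ h0
    intro i
    by_cases hi : i ∈ s
    · rw [ciSup_pos hi]; exact Finset.le_sup' f hi
    · haveI : IsEmpty (i ∈ s) := ⟨hi⟩
      rw [Real.iSup_of_isEmpty]; exact h0
  · apply Finset.sup'_le
    intro i hi
    have hb : BddAbove (Set.range fun i => ⨆ _ : i ∈ s, f i) := by
      refine ⟨s.sup' ⟨i₀, hi₀⟩ f, ?_⟩
      rintro x ⟨j, rfl⟩
      show (⨆ _ : j ∈ s, f j) ≤ _
      by_cases hj : j ∈ s
      · rw [ciSup_pos hj]; exact Finset.le_sup' f hj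
      · haveI : IsEmpty (j ∈ s) := ⟨hj⟩
        rw [Real.iSup_of_isEmpty]; exact h0
    calc f i = ⨆ _ : i ∈ s, f i := (ciSup_pos (f := fun _ => f i) hi).symm
      _ ≤ ⨆ i, ⨆ _ : i ∈ s, f i := le_ciSup hb i

/-- Centering a finite adapted family at its conditional expectations at most triples the
expected maximum: for `Y k = X k - E[X k | 𝒢 (k-1)]`,
`E[sup_{1 ≤ k ≤ N} |Y k|] ≤ 3 E[sup_{1 ≤ k ≤ N} |X k|]`. -/
theorem expected_sup_centered_le {Ω : Type*} {m0 : MeasurableSpace Ω}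
    (μ : Measure Ω) [IsProbabilityMeasure μ]
    (N : ℕ) (hN : 1 ≤ N) (𝒢 : Filtration ℕ m0)
    (X : ℕ → Ω → ℝ)
    (hadap : ∀ k, StronglyMeasurable[𝒢 k] (X k))
    (hint : ∀ k, Integrable (X k) μ) :
    ∫ ω, (⨆ k ∈ Finset.Icc 1 N, |X k ω - (μ[X k | 𝒢 (k - 1)]) ω|) ∂μ
      ≤ 3 * ∫ ω, (⨆ k ∈ Finset.Icc 1 N, |X k ω|) ∂μ := by
  set s : Finset ℕ := Finset.Icc 1 N with hs_def
  have h1s : (1 : ℕ) ∈ s := Finset.mem_Icc.2 ⟨le_refl 1, hN⟩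
  have hsne : s.Nonempty := ⟨1, h1s⟩
  set U := runMax X with hU_def
  have hU0 : ∀ ω, U 0 ω = 0 := fun _ => rfl
  have hUsucc : ∀ k ω, U (k + 1) ω = max (U k ω) |X (k + 1) ω| := fun _ _ => rfl
  have hUnonneg : ∀ k ω, 0 ≤ U k ω := by
    intro k
    induction k with
    | zero => intro ω; exact le_of_eq (hU0 ω).symm
    | succ n ih => intro ω; rw [hUsucc]; exact le_max_of_le_left (ih ω)
  have hUstep : ∀ k ω, U k ω ≤ U (k + 1) ω := fun k ω => by
    rw [hUsucc]; exact le_max_left _ _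
  have hUmono : ∀ j k, j ≤ k → ∀ ω, U j ω ≤ U k ω := by
    intro j k hjk
    induction k with
    | zero => intro ω; have : j = 0 := Nat.le_zero.1 hjk; subst this; exact le_rfl
    | succ n ih =>
      intro ω
      by_cases h : j = n + 1
      · subst h; exact le_rfl
      · have hj : j ≤ n := by omega
        exact (ih hj ω).trans (hUstep n ω)
  have hXleU : ∀ k j, 1 ≤ j → j ≤ k → ∀ ω, |X j ω| ≤ U k ω := by
    intro k
    induction k with
    | zero => intro j h1 h0 ω; omega
    | succ n ih =>
      intro j h1 hj ω
      by_cases hjn : j = n + 1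
      · subst hjn; rw [hUsucc]; exact le_max_right _ _
      · have hjle : j ≤ n := by omega
        exact (ih j h1 hjle ω).trans (hUstep n ω)
  have hUmeas : ∀ k, StronglyMeasurable[𝒢 k] (U k) := by
    intro k
    induction k with
    | zero => exact stronglyMeasurable_const
    | succ n ih =>
      have h1 : StronglyMeasurable[𝒢 (n + 1)] (U n) := ih.mono (𝒢.mono (Nat.le_succ n))
      have h2 : StronglyMeasurable[𝒢 (n + 1)] fun ω => |X (n + 1) ω| := by
        simpa only [Real.norm_eq_abs] using (hadap (n + 1)).norm
      exact @StronglyMeasurable.sup _ _ _ _ (𝒢 (n + 1)) _ _ _ h1 h2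
  have hUint : ∀ k, Integrable (U k) μ := by
    intro k
    induction k with
    | zero =>
      have : U 0 = fun _ => (0 : ℝ) := rfl
      rw [this]; exact integrable_const 0
    | succ n ih => exact ih.sup (hint (n + 1)).abs
  -- identification of U n with the finset sup' of |X k|
  have key : ∀ n, ∀ hn : 1 ≤ n, ∀ ω,
      U n ω = (Finset.Icc 1 n).sup' ⟨1, Finset.mem_Icc.2 ⟨le_refl 1, hn⟩⟩
        (fun k => |X k ω|) := by
    intro n hn
    induction n, hn using Nat.le_induction with
    | base =>
      intro ω
      have h : U 1 ω = |X 1 ω| := by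
        rw [hUsucc 0 ω, hU0 ω]; exact max_eq_right (abs_nonneg _)
      rw [h]
      simp [Finset.Icc_self]
    | succ n hn ih =>
      intro ω
      have hins : Finset.Icc 1 (n + 1) = insert (n + 1) (Finset.Icc 1 n) :=
        (Finset.insert_Icc_right_eq_Icc_add_one (by omega)).symm
      have hne : (Finset.Icc 1 n).Nonempty := ⟨1, Finset.mem_Icc.2 ⟨le_refl 1, hn⟩⟩
      rw [hUsucc n ω, ih ω]
      rw [show ((Finset.Icc 1 (n + 1)).sup'
            ⟨1, Finset.mem_Icc.2 ⟨le_refl 1, by omega⟩⟩ (fun k => |X k ω|))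
          = (insert (n + 1) (Finset.Icc 1 n)).sup'
            (⟨n + 1, Finset.mem_insert_self _ _⟩) (fun k => |X k ω|) from by
        apply Finset.sup'_congr _ hins (fun _ _ => rfl)]
      rw [Finset.sup'_insert hne]
      exact (max_comm _ _)
  -- conditional expectation notation
  set C : ℕ → Ω → ℝ := fun k => μ[(fun ω => U k ω - U (k - 1) ω) | 𝒢 (k - 1)] with hC_def
  have hCint : ∀ k, Integrable (C k) μ := fun k => integrable_condExp
  have hCnonneg : ∀ k, 0 ≤ᵐ[μ] C k := by
    intro k
    apply condExp_nonneg
    exact ae_of_all _ fun ω => sub_nonneg.2 (hUmono (k - 1) k (Nat.sub_le k 1) ω)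
  -- |E[X k | 𝒢 (k-1)]| ≤ U (k-1) + C k a.e.
  have habs : ∀ k, 1 ≤ k → ∀ᵐ ω ∂μ,
      |(μ[X k | 𝒢 (k - 1)]) ω| ≤ U (k - 1) ω + C k ω := by
    intro k hk
    have hm : 𝒢 (k - 1) ≤ m0 := 𝒢.le (k - 1)
    have h1 : μ[X k | 𝒢 (k - 1)] ≤ᵐ[μ] μ[(fun ω => |X k ω|) | 𝒢 (k - 1)] :=
      condExp_mono (hint k) (hint k).abs (ae_of_all μ fun ω => le_abs_self _)
    have h2 : μ[(fun ω => -X k ω) | 𝒢 (k - 1)] ≤ᵐ[μ] μ[(fun ω => |X k ω|) | 𝒢 (k - 1)] :=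
      condExp_mono (hint k).neg (hint k).abs (ae_of_all μ fun ω => neg_le_abs _)
    have h3 : μ[(fun ω => -X k ω) | 𝒢 (k - 1)] =ᵐ[μ] -μ[X k | 𝒢 (k - 1)] := condExp_neg _ _
    have h4 : μ[(fun ω => |X k ω|) | 𝒢 (k - 1)] ≤ᵐ[μ] μ[U k | 𝒢 (k - 1)] :=
      condExp_mono (hint k).abs (hUint k) (ae_of_all μ fun ω => hXleU k k hk le_rfl ω)
    have hdecomp : U k = (fun ω => U (k - 1) ω + (U k ω - U (k - 1) ω)) := by
      funext ω; ring
    have h5 : μ[U k | 𝒢 (k - 1)] =ᵐ[μ]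
        μ[U (k - 1) | 𝒢 (k - 1)] + μ[(fun ω => U k ω - U (k - 1) ω) | 𝒢 (k - 1)] := by
      nth_rewrite 1 [hdecomp]
      exact condExp_add (hUint (k - 1)) ((hUint k).sub (hUint (k - 1))) _
    have h6 : μ[U (k - 1) | 𝒢 (k - 1)] = U (k - 1) :=
      condExp_of_stronglyMeasurable hm (hUmeas (k - 1)) (hUint (k - 1))
    filter_upwards [h1, h2, h3, h4, h5] with ω e1 e2 e3 e4 e5
    have e2' : -(μ[X k | 𝒢 (k - 1)]) ω ≤ (μ[(fun ω => |X k ω|) | 𝒢 (k - 1)]) ω := by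
      calc -(μ[X k | 𝒢 (k - 1)]) ω = (-μ[X k | 𝒢 (k - 1)]) ω := rfl
        _ = (μ[(fun ω => -X k ω) | 𝒢 (k - 1)]) ω := e3.symm
        _ ≤ _ := e2
    have habs' : |(μ[X k | 𝒢 (k - 1)]) ω| ≤ (μ[(fun ω => |X k ω|) | 𝒢 (k - 1)]) ω :=
      abs_le.2 ⟨by linarith, e1⟩
    calc |(μ[X k | 𝒢 (k - 1)]) ω| ≤ (μ[(fun ω => |X k ω|) | 𝒢 (k - 1)]) ω := habs'
      _ ≤ (μ[U k | 𝒢 (k - 1)]) ω := e4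
      _ = (μ[U (k - 1) | 𝒢 (k - 1)] + μ[(fun ω => U k ω - U (k - 1) ω) | 𝒢 (k - 1)]) ω := e5
      _ = U (k - 1) ω + C k ω := by rw [h6]; rfl
  -- a.e. bound of the LHS integrand by B
  set B : Ω → ℝ := fun ω => 2 * U N ω + ∑ k ∈ s, C k ω with hB_def
  have hBint : Integrable B μ :=
    (((hUint N).const_mul 2).add (integrable_finset_sum s fun k _ => hCint k))
  have haeAll : ∀ᵐ ω ∂μ, ∀ k ∈ (s : Set ℕ),
      |(μ[X k | 𝒢 (k - 1)]) ω| ≤ U (k - 1) ω + C k ω ∧ 0 ≤ C k ω := by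
    rw [ae_ball_iff s.countable_toSet]
    intro k hk
    have hk1 : 1 ≤ k := (Finset.mem_Icc.1 hk).1
    filter_upwards [habs k hk1, hCnonneg k] with ω h1 h2
    exact ⟨h1, h2⟩
  have hmain : ∀ᵐ ω ∂μ,
      (⨆ k ∈ Finset.Icc 1 N, |X k ω - (μ[X k | 𝒢 (k - 1)]) ω|) ≤ B ω := by
    filter_upwards [haeAll] with ω hω
    rw [real_biSup_finset_eq_sup' hsne _ (fun k _ => abs_nonneg _)]
    apply Finset.sup'_le
    intro k hk
    have hk1 : 1 ≤ k := (Finset.mem_Icc.1 hk).1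
    have hkN : k ≤ N := (Finset.mem_Icc.1 hk).2
    obtain ⟨e1, _⟩ := hω k hk
    have hXb : |X k ω| ≤ U N ω := hXleU N k hk1 hkN ω
    have hUb : U (k - 1) ω ≤ U N ω := hUmono (k - 1) N (by omega) ω
    have hsum : C k ω ≤ ∑ j ∈ s, C j ω :=
      Finset.single_le_sum (fun j hj => (hω j hj).2) hk
    calc |X k ω - (μ[X k | 𝒢 (k - 1)]) ω|
        ≤ |X k ω| + |(μ[X k | 𝒢 (k - 1)]) ω| := abs_sub _ _
      _ ≤ U N ω + (U (k - 1) ω + C k ω) := add_le_add hXb e1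
      _ ≤ B ω := by rw [hB_def]; simp only []; linarith
  have hLHSnonneg : 0 ≤ᵐ[μ] fun ω =>
      (⨆ k ∈ Finset.Icc 1 N, |X k ω - (μ[X k | 𝒢 (k - 1)]) ω|) := by
    refine ae_of_all _ fun ω => ?_
    show (0 : ℝ) ≤ ⨆ k ∈ Finset.Icc 1 N, |X k ω - (μ[X k | 𝒢 (k - 1)]) ω|
    rw [real_biSup_finset_eq_sup' hsne _ (fun k _ => abs_nonneg _)]
    exact le_trans (abs_nonneg _)
      (Finset.le_sup' (fun k => |X k ω - (μ[X k | 𝒢 (k - 1)]) ω|) h1s)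
  have hLHS : ∫ ω, (⨆ k ∈ Finset.Icc 1 N, |X k ω - (μ[X k | 𝒢 (k - 1)]) ω|) ∂μ
      ≤ ∫ ω, B ω ∂μ := integral_mono_of_nonneg hLHSnonneg hBint hmain
  -- compute ∫ B
  have hintC : ∀ k, 1 ≤ k → ∫ ω, C k ω ∂μ = (∫ ω, U k ω ∂μ) - ∫ ω, U (k - 1) ω ∂μ := by
    intro k hk
    have : ∫ ω, C k ω ∂μ = ∫ ω, (U k ω - U (k - 1) ω) ∂μ :=
      integral_condExp (𝒢.le (k - 1))
    rw [this, integral_sub (hUint k) (hUint (k - 1))]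
  have htel : ∀ n, ∑ k ∈ Finset.Icc 1 n, ((∫ ω, U k ω ∂μ) - ∫ ω, U (k - 1) ω ∂μ)
      = (∫ ω, U n ω ∂μ) - ∫ ω, U 0 ω ∂μ := by
    intro n
    induction n with
    | zero => simp
    | succ m ih =>
      rw [← Finset.insert_Icc_right_eq_Icc_add_one (by omega : 1 ≤ m + 1),
        Finset.sum_insert (by simp), ih]
      have : (m + 1) - 1 = m := rfl
      rw [this]; ring
  have hU0int : ∫ ω, U 0 ω ∂μ = 0 := by
    have : U 0 = fun _ => (0 : ℝ) := rfl
    rw [this]; simp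
  have hBval : ∫ ω, B ω ∂μ = 3 * ∫ ω, U N ω ∂μ := by
    rw [hB_def]
    rw [integral_add ((hUint N).const_mul 2) (integrable_finset_sum s fun k _ => hCint k)]
    rw [integral_const_mul, integral_finset_sum s fun k _ => hCint k]
    have : ∑ k ∈ s, ∫ ω, C k ω ∂μ
        = ∑ k ∈ Finset.Icc 1 N, ((∫ ω, U k ω ∂μ) - ∫ ω, U (k - 1) ω ∂μ) := by
      apply Finset.sum_congr rfl
      intro k hk
      exact hintC k (Finset.mem_Icc.1 hk).1
    rw [this, htel N, hU0int]
    ring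
  -- identify RHS integrand with U N
  have hRHS : ∫ ω, (⨆ k ∈ Finset.Icc 1 N, |X k ω|) ∂μ = ∫ ω, U N ω ∂μ := by
    apply integral_congr_ae
    refine ae_of_all _ fun ω => ?_
    show (⨆ k ∈ Finset.Icc 1 N, |X k ω|) = U N ω
    rw [real_biSup_finset_eq_sup' hsne _ (fun k _ => abs_nonneg _)]
    exact (key N hN ω).symm
  rw [hRHS]
  calc ∫ ω, (⨆ k ∈ Finset.Icc 1 N, |X k ω - (μ[X k | 𝒢 (k - 1)]) ω|) ∂μ
      ≤ ∫ ω, B ω ∂μ := hLHS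
    _ = 3 * ∫ ω, U N ω ∂μ := hBval
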